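/- Let G be a graph with threshold function τ, and let G' arise from G by attaching to every vertex u with τ(u) > 0 a path P_u of order τ(u), joining u to all vertices of P_u. If G is chordal, then G' is chordal. -/

import Mathlib

open SimpleGraph

universe u

/-- `H` is closed under the activation rule: any vertex with at least `τ u` neighbors
in `H` belongs to `H`. -/
def HullClosed {V : Type u} (G : SimpleGraph V) (τ : V → ℤ) (H : Set V) : Prop :=
  ∀ u : V, (τ u ≤ ((G.neighborSet u ∩ H).ncard : ℤ)) → u ∈ H

/-- The hull `H_{(G,τ)}(D)`: smallest superset of `D` closed under the activation rule. -/
def hull {V : Type u} (G : SimpleGraph V) (τ : V → ℤ) (D : Set V) : Set V :=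
  ⋂₀ {H : Set V | D ⊆ H ∧ HullClosed G τ H}

/-- `D` is a dynamic monopoly (target set) of `(G,τ)`. -/
def IsDynMonopoly {V : Type u} (G : SimpleGraph V) (τ : V → ℤ) (D : Set V) : Prop :=
  hull G τ D = Set.univ

/-- `dyn(G,τ)`: minimum order of a dynamic monopoly. -/
noncomputable def dynNum {V : Type u} (G : SimpleGraph V) (τ : V → ℤ) : ℕ :=
  sInf {k | ∃ D : Set V, IsDynMonopoly G τ D ∧ D.ncard = k}

/-- `σ` is a partial incentive of `(G,τ)`. -/
def IsPartialIncentive {V : Type u} (G : SimpleGraph V) (τ : V → ℤ) (σ : V → ℕ) : Prop :=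
  hull G (fun u => τ u - σ u) ∅ = Set.univ

/-- `pi(G,τ)`: minimum weight of a partial incentive. -/
noncomputable def piNum {V : Type u} [Fintype V] (G : SimpleGraph V) (τ : V → ℤ) : ℕ :=
  sInf {k | ∃ σ : V → ℕ, IsPartialIncentive G τ σ ∧ ∑ u, σ u = k}

/-- `I` is a `κ`-degenerate set in `G`: there is a linear order of `I` in which every
vertex has at most `κ u` neighbors among its predecessors. -/
def Degenerate {V : Type u} (G : SimpleGraph V) (κ : V → ℤ) (I : Set V) : Prop :=
  ∃ l : List V, l.Nodup ∧ {v | v ∈ l} = I ∧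
    ∀ i : Fin l.length,
      ((G.neighborSet (l.get i) ∩ {w | w ∈ l.take (i : ℕ)}).ncard : ℤ) ≤ κ (l.get i)

/-- The graph `G'` of Lemma 1: for every edge `uv` of `G` add an independent set of
`n` new vertices adjacent exactly to `u` and `v`. -/
def lemma1Graph {V : Type u} (G : SimpleGraph V) (n : ℕ) :
    SimpleGraph (V ⊕ (G.edgeSet × Fin n)) :=
  SimpleGraph.fromRel (fun x y =>
    match x, y with
    | Sum.inl a, Sum.inl b => G.Adj a b
    | Sum.inl a, Sum.inr e => a ∈ (e.1.1 : Sym2 V)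
    | _, _ => False)

/-- The graph `G'` of Lemma 2: to every vertex `u` with `τ u > 0` attach a path `P_u`
of order `τ u`, joining `u` to all vertices of `P_u`. -/
def attachPaths {V : Type u} (G : SimpleGraph V) (τ : V → ℤ) :
    SimpleGraph (V ⊕ (Σ u : V, Fin (τ u).toNat)) :=
  SimpleGraph.fromRel (fun x y =>
    match x, y with
    | Sum.inl a, Sum.inl b => G.Adj a b
    | Sum.inl a, Sum.inr s => a = s.1
    | Sum.inr s, Sum.inr t => s.1 = t.1 ∧ (s.2 : ℕ) + 1 = (t.2 : ℕ)
    | _, _ => False)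

/-- `G` contains `H` as a minor. -/
def HasMinor {V : Type u} {W : Type} (G : SimpleGraph V) (H : SimpleGraph W) : Prop :=
  ∃ φ : W → Set V,
    (∀ w, (φ w).Nonempty) ∧
    (∀ w, (G.induce (φ w)).Connected) ∧
    (Pairwise fun w w' => Disjoint (φ w) (φ w')) ∧
    ∀ w w', H.Adj w w' → ∃ a ∈ φ w, ∃ b ∈ φ w', G.Adj a b

/-- Planarity, via Wagner's theorem: no `K₅` minor and no `K_{3,3}` minor. -/
def IsPlanar {V : Type u} (G : SimpleGraph V) : Prop :=
  ¬ HasMinor G (completeGraph (Fin 5)) ∧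
  ¬ HasMinor G (completeBipartiteGraph (Fin 3) (Fin 3))

/-- Chordality: every cycle of length at least four has a chord. -/
def IsChordal {V : Type u} (G : SimpleGraph V) : Prop :=
  ∀ ⦃v : V⦄ (c : G.Walk v v), c.IsCycle → 4 ≤ c.length →
    ∃ u w, u ∈ c.support ∧ w ∈ c.support ∧ G.Adj u w ∧ s(u, w) ∉ c.edges

/-- `t`-connectedness: more than `t` vertices, and removing fewer than `t` vertices
leaves the graph connected. -/
def TConnected {V : Type u} [Fintype V] (G : SimpleGraph V) (t : ℕ) : Prop :=
  t < Fintype.card V ∧ ∀ S : Set V, S.ncard < t → (G.induce (Sᶜ)).Connected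

/-- Outside neighbors `N⁺(A)` of `A`. -/
def Nplus {V : Type u} (G : SimpleGraph V) (A : Set V) : Set V :=
  {v | v ∉ A ∧ ∃ u ∈ A, G.Adj u v}

/-- Boundary `N⁻(B) = N⁺(V ∖ B)` of `B`. -/
def Nminus {V : Type u} (G : SimpleGraph V) (B : Set V) : Set V :=
  Nplus G Bᶜ

/-- `B` is an `A`-strong region. -/
def StrongRegion {V : Type u} (G : SimpleGraph V) (τ : V → ℤ) (A B : Set V) : Prop :=
  ¬ B ⊆ hull G τ (A ∪ Nplus G B)

/-- `G` has a tree-decomposition of width at most `w`. -/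
def HasTreeDecompOfWidthLE {V : Type u} (G : SimpleGraph V) (w : ℕ) : Prop :=
  ∃ (ι : Type) (T : SimpleGraph ι) (bag : ι → Set V),
    T.IsTree ∧
    (∀ v, ∃ t, v ∈ bag t) ∧
    (∀ u v, G.Adj u v → ∃ t, u ∈ bag t ∧ v ∈ bag t) ∧
    (∀ v, (T.induce {t | v ∈ bag t}).Connected) ∧
    (∀ t, (bag t).ncard ≤ w + 1)


namespace Stmt5Aux

open SimpleGraph Walk

variable {V : Type} {G : SimpleGraph V} {τ : V → ℤ}

lemma adj_inl_inl {a b : V} : (attachPaths G τ).Adj (Sum.inl a) (Sum.inl b) ↔ G.Adj a b := by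
  constructor
  · rintro ⟨hne, h | h⟩
    · exact h
    · exact h.symm
  · intro h
    exact ⟨by simp [h.ne], Or.inl h⟩

lemma adj_inl_inr {a : V} {s : Σ u : V, Fin (τ u).toNat} :
    (attachPaths G τ).Adj (Sum.inl a) (Sum.inr s) ↔ a = s.1 := by
  constructor
  · rintro ⟨hne, h | h⟩
    · exact h
    · exact h.elim
  · intro h
    exact ⟨by simp, Or.inl h⟩

lemma adj_inr_aux {u : V} {i : Fin (τ u).toNat} {w : V ⊕ (Σ u : V, Fin (τ u).toNat)}
    (h : (attachPaths G τ).Adj (Sum.inr ⟨u, i⟩) w) :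
    w = Sum.inl u ∨ ∃ i' : Fin (τ u).toNat,
      (((i : ℕ) + 1 = (i' : ℕ)) ∨ ((i' : ℕ) + 1 = (i : ℕ))) ∧ w = Sum.inr ⟨u, i'⟩ := by
  cases w with
  | inl a =>
    left
    obtain ⟨hne, h | h⟩ := h
    · exact h.elim
    · exact congrArg Sum.inl h
  | inr s =>
    right
    obtain ⟨u', i'⟩ := s
    obtain ⟨hne, h | h⟩ := h
    · obtain ⟨h1, h2⟩ := h
      subst h1
      exact ⟨i', Or.inl h2, rfl⟩
    · obtain ⟨h1, h2⟩ := h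
      subst h1
      exact ⟨i', Or.inr h2, rfl⟩

def inlHom (G : SimpleGraph V) (τ : V → ℤ) : G →g attachPaths G τ :=
  ⟨Sum.inl, fun h => adj_inl_inl.mpr h⟩

lemma pull :
    ∀ {x y : V ⊕ (Σ u : V, Fin (τ u).toNat)} (p : (attachPaths G τ).Walk x y)
      (_ : ∀ z ∈ p.support, ∃ c, z = Sum.inl c) (a b : V) (hx : x = Sum.inl a)
      (hy : y = Sum.inl b),
      ∃ q : G.Walk a b, q.map (inlHom G τ) = p.copy hx hy := by
  intro x y p
  induction p with
  | nil =>
    intro hs a b hx hy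
    subst hx
    have hab : a = b := Sum.inl.inj hy
    subst hab
    exact ⟨SimpleGraph.Walk.nil, rfl⟩
  | @cons _ m _ h p ih =>
    intro hs a b hx hy
    obtain ⟨cm, hcm⟩ := hs m (by
      rw [SimpleGraph.Walk.support_cons]; exact List.mem_cons_of_mem _ p.start_mem_support)
    obtain ⟨q, hq⟩ := ih (fun z hz => hs z (by
      rw [SimpleGraph.Walk.support_cons]; exact List.mem_cons_of_mem _ hz)) cm b hcm hy
    subst hx
    subst hcm
    have hadj : G.Adj a cm := adj_inl_inl.mp h
    refine ⟨SimpleGraph.Walk.cons hadj q, ?_⟩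
    rw [SimpleGraph.Walk.map_cons, hq, SimpleGraph.Walk.copy_cons]
    rfl

section Generic

lemma path_first_nbr {x y w : V} (q : G.Walk x y) (hq : q.IsPath) (hw : s(x, w) ∈ q.edges) :
    w = q.getVert 1 := by
  cases q with
  | nil => simp at hw
  | @cons _ z _ h r =>
    rw [SimpleGraph.Walk.edges_cons, List.mem_cons] at hw
    rcases hw with hw | hw
    · rw [Sym2.eq_iff] at hw
      rcases hw with ⟨-, hw⟩ | ⟨hxz, hw⟩
      · rw [SimpleGraph.Walk.getVert_cons_succ, SimpleGraph.Walk.getVert_zero]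
        exact hw
      · exact absurd hxz h.ne
    · exfalso
      rw [SimpleGraph.Walk.cons_isPath_iff] at hq
      exact hq.2 (SimpleGraph.Walk.fst_mem_support_of_mem_edges r hw)

lemma walk_first_edge_mem {x y : V} (q : G.Walk x y) (hq : ¬ q.Nil) :
    s(x, q.getVert 1) ∈ q.edges := by
  cases q with
  | nil => simp at hq
  | @cons _ z _ h r =>
    rw [SimpleGraph.Walk.getVert_cons_succ, SimpleGraph.Walk.getVert_zero, SimpleGraph.Walk.edges_cons]
    exact List.mem_cons_self

lemma cycle_start_nbrs {x : V} (c : G.Walk x x) (hc : c.IsCycle) :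
    ∃ y z, y ≠ z ∧ s(x, y) ∈ c.edges ∧ s(x, z) ∈ c.edges ∧
      ∀ w, s(x, w) ∈ c.edges → w = y ∨ w = z := by
  cases c with
  | nil => exact absurd hc SimpleGraph.Walk.IsCycle.not_of_nil
  | @cons _ y _ h p =>
    have hlen := hc.three_le_length
    have hp := (SimpleGraph.Walk.cons_isCycle_iff p h).mp hc
    set q := p.reverse with hqdef
    have hqpath : q.IsPath := hp.1.reverse
    have hqnil : ¬ q.Nil := by
      rw [SimpleGraph.Walk.nil_iff_length_eq]
      rw [SimpleGraph.Walk.length_reverse]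
      simp only [SimpleGraph.Walk.length_cons] at hlen
      omega
    refine ⟨y, q.getVert 1, ?_, ?_, ?_, ?_⟩
    · intro hyz
      apply hp.2
      have := walk_first_edge_mem q hqnil
      rw [SimpleGraph.Walk.edges_reverse, List.mem_reverse] at this
      rwa [← hyz] at this
    · rw [SimpleGraph.Walk.edges_cons]; exact List.mem_cons_self
    · have := walk_first_edge_mem q hqnil
      rw [SimpleGraph.Walk.edges_reverse, List.mem_reverse] at this
      rw [SimpleGraph.Walk.edges_cons]
      exact List.mem_cons_of_mem _ this
    · intro w hw
      rw [SimpleGraph.Walk.edges_cons, List.mem_cons] at hw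
      rcases hw with hw | hw
      · rw [Sym2.eq_iff] at hw
        rcases hw with ⟨-, hw⟩ | ⟨hxy, hw⟩
        · exact Or.inl hw
        · exact absurd hxy h.ne
      · right
        apply path_first_nbr q hqpath
        rw [SimpleGraph.Walk.edges_reverse, List.mem_reverse]
        exact hw

lemma cycle_two_nbrs [DecidableEq V] {v x : V} (c : G.Walk v v) (hc : c.IsCycle)
    (hx : x ∈ c.support) :
    ∃ y z, y ≠ z ∧ s(x, y) ∈ c.edges ∧ s(x, z) ∈ c.edges ∧
      ∀ w, s(x, w) ∈ c.edges → w = y ∨ w = z := by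
  obtain ⟨y, z, hyz, hy, hz, hu⟩ := cycle_start_nbrs (c.rotate _ hx) (hc.rotate hx)
  refine ⟨y, z, hyz, ?_, ?_, ?_⟩
  · exact ((SimpleGraph.Walk.rotate_edges c _ hx).perm.mem_iff).mp hy
  · exact ((SimpleGraph.Walk.rotate_edges c _ hx).perm.mem_iff).mp hz
  · intro w hw
    exact hu w (((SimpleGraph.Walk.rotate_edges c _ hx).perm.mem_iff).mpr hw)

lemma walk_closed {S : Set V} :
    ∀ {a b : V} (q : G.Walk a b), a ∈ S → (∀ x y, x ∈ S → s(x, y) ∈ q.edges → y ∈ S) →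
      ∀ z ∈ q.support, z ∈ S := by
  intro a b q
  induction q with
  | nil =>
    intro ha _ z hz
    rw [SimpleGraph.Walk.support_nil, List.mem_singleton] at hz
    exact hz ▸ ha
  | @cons _ m _ h p ih =>
    intro ha hcl z hz
    have hm : m ∈ S := hcl _ _ ha (by
      rw [SimpleGraph.Walk.edges_cons]; exact List.mem_cons_self)
    rw [SimpleGraph.Walk.support_cons, List.mem_cons] at hz
    rcases hz with rfl | hz
    · exact ha
    · exact ih hm (fun x y hx he => hcl x y hx (by
        rw [SimpleGraph.Walk.edges_cons]; exact List.mem_cons_of_mem _ he)) z hz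

end Generic

end Stmt5Aux

/-- if `G` is chordal then the path-attachment graph `G'` is chordal. -/
theorem stmt_5 {V : Type} (G : SimpleGraph V) (τ : V → ℤ) (hG : IsChordal G) :
    IsChordal (attachPaths G τ) := by
  classical
  intro v c hc hlen
  rcases Classical.em (∀ z ∈ c.support, ∃ a, z = Sum.inl a) with hall | hall
  · -- Case 1: the cycle stays inside the copy of `G`.
    obtain ⟨a, ha⟩ := hall v c.start_mem_support
    subst ha
    obtain ⟨q, hq⟩ := Stmt5Aux.pull c hall a a rfl rfl
    rw [SimpleGraph.Walk.copy_rfl_rfl] at hq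
    have hinj : Function.Injective (Stmt5Aux.inlHom G τ) := fun x y h => Sum.inl.inj h
    have hqc : q.IsCycle := by
      rw [← SimpleGraph.Walk.map_isCycle_iff_of_injective hinj, hq]
      exact hc
    have hql : 4 ≤ q.length := by
      rw [← hq] at hlen
      erw [SimpleGraph.Walk.length_map] at hlen
      exact hlen
    obtain ⟨x, w, hx, hw, hadj, hne⟩ := hG q hqc hql
    refine ⟨Sum.inl x, Sum.inl w, ?_, ?_, Stmt5Aux.adj_inl_inl.mpr hadj, ?_⟩
    · rw [← hq]; erw [SimpleGraph.Walk.support_map]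
      exact List.mem_map_of_mem hx
    · rw [← hq]; erw [SimpleGraph.Walk.support_map]
      exact List.mem_map_of_mem hw
    · intro hmem
      rw [← hq] at hmem; erw [SimpleGraph.Walk.edges_map] at hmem
      obtain ⟨e, he, hee⟩ := List.mem_map.mp hmem
      apply hne
      have heq : e = s(x, w) := Sym2.map.injective hinj hee
      rwa [heq] at he
  · -- Case 2: the cycle uses an attached path vertex.
    push_neg at hall
    obtain ⟨z0, hz0sup, hz0⟩ := hall
    obtain (a | ⟨u, i0⟩) := z0
    · exact absurd rfl (hz0 a)
    have Pinj : ∀ a b : Fin (τ u).toNat,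
        (Sum.inr ⟨u, a⟩ : V ⊕ (Σ u : V, Fin (τ u).toNat)) = Sum.inr ⟨u, b⟩ →
        (a : ℕ) = (b : ℕ) := by
      intro a b h
      exact congrArg (Sum.elim (fun _ => 0) (fun s => ((s.2 : ℕ) : ℕ))) h
    letI : DecidablePred (fun i : Fin (τ u).toNat =>
        (Sum.inr ⟨u, i⟩ : V ⊕ (Σ u : V, Fin (τ u).toNat)) ∈ c.support) :=
      fun _ => Classical.propDecidable _
    obtain ⟨F, hFmem⟩ : ∃ F : Finset (Fin (τ u).toNat),
        ∀ i, i ∈ F ↔ (Sum.inr ⟨u, i⟩ : V ⊕ (Σ u : V, Fin (τ u).toNat)) ∈ c.support :=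
      ⟨Finset.univ.filter (fun i =>
          (Sum.inr ⟨u, i⟩ : V ⊕ (Σ u : V, Fin (τ u).toNat)) ∈ c.support),
        fun i => by simp⟩
    have hFne : F.Nonempty := ⟨i0, (hFmem i0).mpr hz0sup⟩
    obtain ⟨j, hjF, hjmin⟩ : ∃ j, j ∈ F ∧ ∀ i ∈ F, (j : ℕ) ≤ (i : ℕ) :=
      ⟨F.min' hFne, F.min'_mem hFne, fun i hi => F.min'_le i hi⟩
    obtain ⟨k, hkF, hkmax⟩ : ∃ k, k ∈ F ∧ ∀ i ∈ F, (i : ℕ) ≤ (k : ℕ) :=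
      ⟨F.max' hFne, F.max'_mem hFne, fun i hi => F.le_max' i hi⟩
    have hjsup : (Sum.inr ⟨u, j⟩ : V ⊕ (Σ u : V, Fin (τ u).toNat)) ∈ c.support :=
      (hFmem j).mp hjF
    have hksup : (Sum.inr ⟨u, k⟩ : V ⊕ (Σ u : V, Fin (τ u).toNat)) ∈ c.support :=
      (hFmem k).mp hkF
    -- possible cycle-neighbors of a path vertex
    have edge_opts : ∀ (i : Fin (τ u).toNat) w, s(Sum.inr ⟨u, i⟩, w) ∈ c.edges →
        w = Sum.inl u ∨ ∃ i' : Fin (τ u).toNat,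
          (((i : ℕ) + 1 = (i' : ℕ)) ∨ ((i' : ℕ) + 1 = (i : ℕ))) ∧
          w = Sum.inr ⟨u, i'⟩ ∧ i' ∈ F := by
      intro i w hw
      have hadj := c.adj_of_mem_edges hw
      rcases Stmt5Aux.adj_inr_aux hadj with h | ⟨i', hrel, rfl⟩
      · exact Or.inl h
      · refine Or.inr ⟨i', hrel, rfl, ?_⟩
        exact (hFmem i').mpr (c.snd_mem_support_of_mem_edges hw)
    -- the two cycle-neighbors of the minimal path vertex
    have key_j : s((Sum.inr ⟨u, j⟩ : V ⊕ (Σ u : V, Fin (τ u).toNat)), Sum.inl u) ∈ c.edges ∧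
        ∃ jp : Fin (τ u).toNat, ((j : ℕ) + 1 = (jp : ℕ)) ∧
        s((Sum.inr ⟨u, j⟩ : V ⊕ (Σ u : V, Fin (τ u).toNat)), Sum.inr ⟨u, jp⟩) ∈ c.edges ∧
        jp ∈ F ∧
        (∀ w, s((Sum.inr ⟨u, j⟩ : V ⊕ (Σ u : V, Fin (τ u).toNat)), w) ∈ c.edges →
          w = Sum.inl u ∨ w = Sum.inr ⟨u, jp⟩) := by
      obtain ⟨y, z, hyz, hey, hez, huniq⟩ := Stmt5Aux.cycle_two_nbrs c hc hjsup
      have optj : ∀ w, s((Sum.inr ⟨u, j⟩ : V ⊕ (Σ u : V, Fin (τ u).toNat)), w) ∈ c.edges →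
          w = Sum.inl u ∨ ∃ i' : Fin (τ u).toNat,
            ((j : ℕ) + 1 = (i' : ℕ)) ∧ w = Sum.inr ⟨u, i'⟩ ∧ i' ∈ F := by
        intro w hw
        rcases edge_opts j w hw with h | ⟨i', hrel | hrel, hwi, hiF⟩
        · exact Or.inl h
        · exact Or.inr ⟨i', hrel, hwi, hiF⟩
        · exfalso
          have hle := hjmin i' hiF
          omega
      rcases optj y hey with hyu | ⟨i₁, hi₁, rfl, hi₁F⟩ <;>
        rcases optj z hez with hzu | ⟨i₂, hi₂, rfl, hi₂F⟩
      · exact absurd (hyu.trans hzu.symm) hyz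
      · subst hyu
        refine ⟨hey, i₂, hi₂, hez, hi₂F, ?_⟩
        intro w hw
        rcases huniq w hw with rfl | rfl
        · exact Or.inl rfl
        · exact Or.inr rfl
      · subst hzu
        refine ⟨hez, i₁, hi₁, hey, hi₁F, ?_⟩
        intro w hw
        rcases huniq w hw with rfl | rfl
        · exact Or.inr rfl
        · exact Or.inl rfl
      · exfalso
        apply hyz
        have : i₁ = i₂ := Fin.ext (by omega)
        rw [this]
    -- the two cycle-neighbors of the maximal path vertex
    have key_k : s((Sum.inr ⟨u, k⟩ : V ⊕ (Σ u : V, Fin (τ u).toNat)), Sum.inl u) ∈ c.edges ∧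
        ∃ km : Fin (τ u).toNat, ((km : ℕ) + 1 = (k : ℕ)) ∧
        s((Sum.inr ⟨u, k⟩ : V ⊕ (Σ u : V, Fin (τ u).toNat)), Sum.inr ⟨u, km⟩) ∈ c.edges ∧
        km ∈ F ∧
        (∀ w, s((Sum.inr ⟨u, k⟩ : V ⊕ (Σ u : V, Fin (τ u).toNat)), w) ∈ c.edges →
          w = Sum.inl u ∨ w = Sum.inr ⟨u, km⟩) := by
      obtain ⟨y, z, hyz, hey, hez, huniq⟩ := Stmt5Aux.cycle_two_nbrs c hc hksup
      have optk : ∀ w, s((Sum.inr ⟨u, k⟩ : V ⊕ (Σ u : V, Fin (τ u).toNat)), w) ∈ c.edges →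
          w = Sum.inl u ∨ ∃ i' : Fin (τ u).toNat,
            ((i' : ℕ) + 1 = (k : ℕ)) ∧ w = Sum.inr ⟨u, i'⟩ ∧ i' ∈ F := by
        intro w hw
        rcases edge_opts k w hw with h | ⟨i', hrel | hrel, hwi, hiF⟩
        · exact Or.inl h
        · exfalso
          have hle := hkmax i' hiF
          omega
        · exact Or.inr ⟨i', hrel, hwi, hiF⟩
      rcases optk y hey with hyu | ⟨i₁, hi₁, rfl, hi₁F⟩ <;>
        rcases optk z hez with hzu | ⟨i₂, hi₂, rfl, hi₂F⟩
      · exact absurd (hyu.trans hzu.symm) hyz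
      · subst hyu
        refine ⟨hey, i₂, hi₂, hez, hi₂F, ?_⟩
        intro w hw
        rcases huniq w hw with rfl | rfl
        · exact Or.inl rfl
        · exact Or.inr rfl
      · subst hzu
        refine ⟨hez, i₁, hi₁, hey, hi₁F, ?_⟩
        intro w hw
        rcases huniq w hw with rfl | rfl
        · exact Or.inr rfl
        · exact Or.inl rfl
      · exfalso
        apply hyz
        have : i₁ = i₂ := Fin.ext (by omega)
        rw [this]
    obtain ⟨heju, jp, hjp1, hejjp, hjpF, huniq_j⟩ := key_j
    obtain ⟨heku, km, hkm1, hekkm, hkmF, huniq_k⟩ := key_k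
    have husup : (Sum.inl u : V ⊕ (Σ u : V, Fin (τ u).toNat)) ∈ c.support :=
      c.snd_mem_support_of_mem_edges heju
    have hjple : (jp : ℕ) ≤ (k : ℕ) := hkmax jp hjpF
    rcases lt_or_eq_of_le hjple with hlt | heq
    · -- chord from `u` to the path vertex after the minimal one
      refine ⟨Sum.inl u, Sum.inr ⟨u, jp⟩, husup, (hFmem jp).mp hjpF, ?_, ?_⟩
      · exact Stmt5Aux.adj_inl_inr.mpr rfl
      · intro hmem
        obtain ⟨y', z', hne', _, _, huniq'⟩ := Stmt5Aux.cycle_two_nbrs c hc husup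
        have h1 : (Sum.inr ⟨u, j⟩ : V ⊕ (Σ u : V, Fin (τ u).toNat)) = y' ∨
            (Sum.inr ⟨u, j⟩ : V ⊕ (Σ u : V, Fin (τ u).toNat)) = z' :=
          huniq' _ (by rw [Sym2.eq_swap]; exact heju)
        have h2 : (Sum.inr ⟨u, k⟩ : V ⊕ (Σ u : V, Fin (τ u).toNat)) = y' ∨
            (Sum.inr ⟨u, k⟩ : V ⊕ (Σ u : V, Fin (τ u).toNat)) = z' :=
          huniq' _ (by rw [Sym2.eq_swap]; exact heku)
        have h3 : (Sum.inr ⟨u, jp⟩ : V ⊕ (Σ u : V, Fin (τ u).toNat)) = y' ∨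
            (Sum.inr ⟨u, jp⟩ : V ⊕ (Σ u : V, Fin (τ u).toNat)) = z' :=
          huniq' _ hmem
        rcases h1 with h1 | h1 <;> rcases h2 with h2 | h2 <;> rcases h3 with h3 | h3 <;>
          first
          | (have := Pinj _ _ (h1.trans h2.symm); omega)
          | (have := Pinj _ _ (h1.trans h3.symm); omega)
          | (have := Pinj _ _ (h2.trans h3.symm); omega)
    · -- the cycle would be a triangle: contradiction with length ≥ 4
      exfalso
      have hjpk : jp = k := Fin.ext heq
      subst hjpk
      obtain ⟨y', z', hne', _, _, huniq'⟩ := Stmt5Aux.cycle_two_nbrs c hc husup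
      have h1 : (Sum.inr ⟨u, j⟩ : V ⊕ (Σ u : V, Fin (τ u).toNat)) = y' ∨
          (Sum.inr ⟨u, j⟩ : V ⊕ (Σ u : V, Fin (τ u).toNat)) = z' :=
        huniq' _ (by rw [Sym2.eq_swap]; exact heju)
      have h2 : (Sum.inr ⟨u, jp⟩ : V ⊕ (Σ u : V, Fin (τ u).toNat)) = y' ∨
          (Sum.inr ⟨u, jp⟩ : V ⊕ (Σ u : V, Fin (τ u).toNat)) = z' :=
        huniq' _ (by rw [Sym2.eq_swap]; exact heku)
      have huniq_u : ∀ w, s((Sum.inl u : V ⊕ (Σ u : V, Fin (τ u).toNat)), w) ∈ c.edges →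
          w = Sum.inr ⟨u, j⟩ ∨ w = Sum.inr ⟨u, jp⟩ := by
        intro w hw
        rcases h1 with h1 | h1 <;> rcases h2 with h2 | h2
        · exact absurd (Pinj _ _ (h1.trans h2.symm)) (by omega)
        · rcases huniq' w hw with rfl | rfl
          · exact Or.inl h1.symm
          · exact Or.inr h2.symm
        · rcases huniq' w hw with rfl | rfl
          · exact Or.inr h2.symm
          · exact Or.inl h1.symm
        · exact absurd (Pinj _ _ (h1.trans h2.symm)) (by omega)
      have hkmj : j = km := by
        rcases huniq_k (Sum.inr ⟨u, j⟩) (by rw [Sym2.eq_swap]; exact hejjp) with h | h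
        · exact absurd h (by simp)
        · exact (Fin.ext (Pinj _ _ h.symm)).symm
      rw [← hkmj] at huniq_k hkm1
      have hc₂ : (c.rotate _ husup).IsCycle := hc.rotate husup
      have hedge_iff : ∀ e, e ∈ (c.rotate _ husup).edges ↔ e ∈ c.edges := fun e =>
        (SimpleGraph.Walk.rotate_edges c _ husup).perm.mem_iff
      have hclosed : ∀ x y,
          x ∈ ({Sum.inl u, Sum.inr ⟨u, j⟩, Sum.inr ⟨u, jp⟩} :
            Set (V ⊕ (Σ u : V, Fin (τ u).toNat))) →
          s(x, y) ∈ (c.rotate _ husup).edges →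
          y ∈ ({Sum.inl u, Sum.inr ⟨u, j⟩, Sum.inr ⟨u, jp⟩} :
            Set (V ⊕ (Σ u : V, Fin (τ u).toNat))) := by
        intro x y hx he
        rw [hedge_iff] at he
        rcases hx with rfl | rfl | rfl
        · rcases huniq_u y he with rfl | rfl
          · exact Or.inr (Or.inl rfl)
          · exact Or.inr (Or.inr rfl)
        · rcases huniq_j y he with rfl | rfl
          · exact Or.inl rfl
          · exact Or.inr (Or.inr rfl)
        · rcases huniq_k y he with rfl | rfl
          · exact Or.inl rfl
          · exact Or.inr (Or.inl rfl)
      have hsub : ∀ z ∈ (c.rotate _ husup).support,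
          z ∈ ({Sum.inl u, Sum.inr ⟨u, j⟩, Sum.inr ⟨u, jp⟩} :
            Set (V ⊕ (Σ u : V, Fin (τ u).toNat))) :=
        Stmt5Aux.walk_closed (c.rotate _ husup) (Or.inl rfl) hclosed
      have hnd : (c.rotate _ husup).support.tail.Nodup := hc₂.support_nodup
      have hlen₂ : (c.rotate _ husup).support.tail.length = c.length := by
        have h1 : (c.rotate _ husup).length = c.length := by
          have := (SimpleGraph.Walk.rotate_edges c _ husup).perm.length_eq
          rwa [SimpleGraph.Walk.length_edges, SimpleGraph.Walk.length_edges] at this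
        have h2 := (c.rotate _ husup).length_support
        have h3 : (c.rotate _ husup).support.tail.length =
            (c.rotate _ husup).support.length - 1 := List.length_tail
        omega
      have hsubF : (c.rotate _ husup).support.tail.toFinset ⊆
          {Sum.inl u, Sum.inr ⟨u, j⟩, Sum.inr ⟨u, jp⟩} := by
        intro z hz
        rw [List.mem_toFinset] at hz
        rcases hsub z (List.mem_of_mem_tail hz) with rfl | rfl | rfl
        · exact Finset.mem_insert_self _ _
        · exact Finset.mem_insert_of_mem (Finset.mem_insert_self _ _)
        · exact Finset.mem_insert_of_mem (Finset.mem_insert_of_mem (Finset.mem_singleton_self _))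
      have hcard1 : (c.rotate _ husup).support.tail.toFinset.card = c.length := by
        rw [List.toFinset_card_of_nodup hnd, hlen₂]
      have hcard2 : ({Sum.inl u, Sum.inr ⟨u, j⟩, Sum.inr ⟨u, jp⟩} :
          Finset (V ⊕ (Σ u : V, Fin (τ u).toNat))).card ≤ 3 := by
        apply le_trans (Finset.card_insert_le _ _)
        have := Finset.card_insert_le (Sum.inr ⟨u, j⟩ : V ⊕ (Σ u : V, Fin (τ u).toNat))
          ({Sum.inr ⟨u, jp⟩} : Finset (V ⊕ (Σ u : V, Fin (τ u).toNat)))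
        simp only [Finset.card_singleton] at this
        omega
      have := Finset.card_le_card hsubF
      omega
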